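/- For all a, x > 0, ∫_0^x e^{-s} s^{a-1} (x - s)^{-1/2} ds ≤ min(2Γ(a) + π a^a e^{-a}, 2(1/a + 1) x^a) / √(2x). -/

import Mathlib

open Real MeasureTheory Set intervalIntegral

lemma aux_inv_sqrt {u : ℝ} (hu : 0 ≤ u) : (Real.sqrt u)⁻¹ = u ^ (-(1/2) : ℝ) := by
  rw [Real.rpow_neg hu, Real.sqrt_eq_rpow]

lemma aux_rpow_II (c d e : ℝ) : IntervalIntegrable (fun s => (e - s) ^ (-(1/2):ℝ)) volume c d := by
  have h := (intervalIntegrable_rpow' (a := e - c) (b := e - d) (r := -(1/2))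
    (by norm_num)).comp_sub_left e
  simpa using h

lemma ker_II {x : ℝ} (hx : 0 < x) :
    IntervalIntegrable (fun s => (Real.sqrt s * Real.sqrt (x - s))⁻¹) volume (x/2) x := by
  have hb : IntervalIntegrable (fun s => (Real.sqrt (x/2))⁻¹ * (x - s) ^ (-(1/2):ℝ))
      volume (x/2) x := (aux_rpow_II _ _ _).const_mul _
  apply hb.mono_fun
  · apply Measurable.aestronglyMeasurable
    exact ((Real.continuous_sqrt.measurable).mul
      ((Real.continuous_sqrt.measurable).comp (measurable_const.sub measurable_id))).inv
  · rw [Set.uIoc_of_le (by linarith)]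
    filter_upwards [ae_restrict_mem measurableSet_Ioc] with s hs
    have hs0 : 0 < s := lt_of_le_of_lt (by linarith) hs.1
    have hxs : 0 ≤ x - s := by linarith [hs.2]
    rw [Real.norm_eq_abs, Real.norm_eq_abs, abs_of_nonneg (by positivity),
      abs_of_nonneg (by positivity)]
    rw [mul_inv, ← aux_inv_sqrt hxs]
    apply mul_le_mul_of_nonneg_right _ (by positivity)
    apply inv_anti₀ (Real.sqrt_pos.mpr (by linarith))
    exact Real.sqrt_le_sqrt hs.1.le

lemma ker_integral {x : ℝ} (hx : 0 < x) :
    ∫ s in (x/2)..x, (Real.sqrt s * Real.sqrt (x - s))⁻¹ = π/2 := by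
  have hle : x/2 ≤ x := by linarith
  have hcont : ContinuousOn (fun s : ℝ => Real.arcsin (2*s/x - 1)) (Icc (x/2) x) :=
    (Real.continuous_arcsin.comp (by continuity)).continuousOn
  have hderiv : ∀ s ∈ Ioo (x/2) x, HasDerivWithinAt (fun s : ℝ => Real.arcsin (2*s/x - 1))
      ((Real.sqrt s * Real.sqrt (x - s))⁻¹) (Ioi s) s := by
    intro s hs
    have hs0 : 0 < s := lt_trans (by linarith) hs.1
    have hxs : 0 < x - s := by linarith [hs.2]
    have ht1 : 2*s/x - 1 ≠ -1 := by
      have h0 : 0 < 2*s/x := by positivity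
      intro h; linarith
    have ht2 : 2*s/x - 1 ≠ 1 := by
      have h0 : 2*s/x < 2 := by rw [div_lt_iff₀ hx]; linarith [hs.2]
      intro h; linarith
    have hinner : HasDerivAt (fun s : ℝ => 2*s/x - 1) (2/x) s := by
      simpa using (((hasDerivAt_id s).const_mul (2:ℝ)).div_const x).sub_const 1
    have harc := (Real.hasDerivAt_arcsin ht1 ht2).comp s hinner
    have hsq : Real.sqrt (1 - (2*s/x - 1)^2) = 2 * Real.sqrt s * Real.sqrt (x - s) / x := by
      have h1 : 1 - (2*s/x - 1)^2 = (2 * Real.sqrt s * Real.sqrt (x - s) / x)^2 := by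
        have e1 : (2 * Real.sqrt s * Real.sqrt (x - s) / x)^2
            = 4 * (Real.sqrt s ^2 * Real.sqrt (x-s)^2) / x^2 := by ring
        rw [e1, Real.sq_sqrt hs0.le, Real.sq_sqrt hxs.le]
        field_simp
        ring
      rw [h1, Real.sqrt_sq (by positivity)]
    have heq : 1 / Real.sqrt (1 - (2*s/x - 1)^2) * (2/x)
        = (Real.sqrt s * Real.sqrt (x - s))⁻¹ := by
      rw [hsq]
      have h2 : Real.sqrt s ≠ 0 := by positivity
      have h3 : Real.sqrt (x - s) ≠ 0 := by positivity
      field_simp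
    rw [heq] at harc
    exact harc.hasDerivWithinAt
  rw [intervalIntegral.integral_eq_sub_of_hasDeriv_right_of_le hle hcont hderiv (ker_II hx)]
  have e1 : 2*x/x - 1 = 1 := by field_simp; ring
  have e2 : 2*(x/2)/x - 1 = 0 := by field_simp; ring
  rw [e1, e2, Real.arcsin_one, Real.arcsin_zero, sub_zero]

lemma exp_mul_rpow_le {a s : ℝ} (ha : 0 < a) (hs : 0 ≤ s) :
    Real.exp (-s) * s ^ a ≤ a ^ a * Real.exp (-a) := by
  rcases eq_or_lt_of_le hs with rfl | hs0
  · rw [Real.zero_rpow ha.ne', mul_zero]; positivity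
  · rw [Real.rpow_def_of_pos hs0, Real.rpow_def_of_pos ha, ← Real.exp_add, ← Real.exp_add]
    apply Real.exp_le_exp.mpr
    have h := Real.log_le_sub_one_of_pos (div_pos hs0 ha)
    rw [Real.log_div hs0.ne' ha.ne'] at h
    have h2 : a * (Real.log s - Real.log a) ≤ a * (s/a - 1) :=
      mul_le_mul_of_nonneg_left h ha.le
    have h3 : a * (s/a - 1) = s - a := by field_simp
    nlinarith

lemma rpow_le_exp_decay {a x s : ℝ} (hx : 0 < x) (hs : 0 < s) (ha : 1 ≤ a) :
    s ^ (a-1) ≤ x ^ (a-1) * Real.exp (-((a-1)/x) * (x - s)) := by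
  rw [Real.rpow_def_of_pos hs, Real.rpow_def_of_pos hx, ← Real.exp_add]
  apply Real.exp_le_exp.mpr
  have h := Real.log_le_sub_one_of_pos (div_pos hs hx)
  rw [Real.log_div hs.ne' hx.ne'] at h
  have h2 : (a-1) * (Real.log s - Real.log x) ≤ (a-1) * (s/x - 1) :=
    mul_le_mul_of_nonneg_left h (by linarith)
  have h3 : (a-1) * (s/x - 1) = -((a-1)/x) * (x - s) := by field_simp; ring
  nlinarith

lemma two_rpow_le {a : ℝ} (ha : 0 ≤ a) : (2:ℝ)^(-a) ≤ (1 + Real.log 2 * a)⁻¹ := by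
  have hl : 0 < Real.log 2 := Real.log_pos one_lt_two
  rw [Real.rpow_def_of_pos two_pos, mul_neg, Real.exp_neg]
  apply inv_anti₀ (by positivity)
  nlinarith [Real.add_one_le_exp (Real.log 2 * a)]

lemma numeric1 {a : ℝ} (ha : 0 < a) : (2:ℝ)^(-a) * (2 + π*a) ≤ 2 + 2*a := by
  have h1 := two_rpow_le ha.le
  have hl : 0.6931471803 < Real.log 2 := Real.log_two_gt_d9
  have hpi : π < 3.15 := Real.pi_lt_d2
  have hpos : (0:ℝ) < 1 + Real.log 2 * a := by nlinarith
  have hpi0 := Real.pi_pos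
  have h2 : (2:ℝ)^(-a) * (2 + π*a) ≤ (1 + Real.log 2 * a)⁻¹ * (2 + π*a) := by
    apply mul_le_mul_of_nonneg_right h1 (by nlinarith)
  refine h2.trans ?_
  rw [inv_mul_le_iff₀ hpos]
  nlinarith [mul_nonneg ha.le (mul_nonneg ha.le (Real.log_nonneg one_le_two))]

lemma numeric2 {a : ℝ} (ha : 1/2 ≤ a) (ha3 : a ≤ 3) :
    2 * (2:ℝ)^(-a) / a + Real.sqrt 2 * π / 2 ≤ 2/a + 2 := by
  have h1 := two_rpow_le (by linarith : (0:ℝ) ≤ a)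
  have hl : 0.6931471803 < Real.log 2 := Real.log_two_gt_d9
  have hl2 : Real.log 2 < 0.6931471808 := Real.log_two_lt_d9
  have hpi : π < 3.15 := Real.pi_lt_d2
  have hs2 : Real.sqrt 2 ≤ 1.415 := by
    rw [show (1.415:ℝ) = Real.sqrt (1.415^2) by rw [Real.sqrt_sq]; norm_num]
    apply Real.sqrt_le_sqrt; norm_num
  have ha0 : (0:ℝ) < a := by linarith
  have hpos : (0:ℝ) < 1 + Real.log 2 * a := by nlinarith
  have key : Real.sqrt 2 * π / 2 ≤ 2 + 2 * (1 - (1 + Real.log 2 * a)⁻¹) / a := by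
    have e1 : 1 - (1 + Real.log 2 * a)⁻¹ = Real.log 2 * a / (1 + Real.log 2 * a) := by
      field_simp
      ring
    rw [e1]
    have e2 : 2 * (Real.log 2 * a / (1 + Real.log 2 * a)) / a
        = 2 * Real.log 2 / (1 + Real.log 2 * a) := by
      field_simp
    rw [e2]
    have e3 : (0.45:ℝ) ≤ 2 * Real.log 2 / (1 + Real.log 2 * a) := by
      rw [le_div_iff₀ hpos]; nlinarith
    nlinarith [Real.sqrt_nonneg 2, Real.pi_pos]
  have h4 : 2 * (2:ℝ)^(-a) / a ≤ 2 * (1 + Real.log 2 * a)⁻¹ / a := by gcongr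
  have h5 : 2 * (1 + Real.log 2 * a)⁻¹ / a + (2 + 2 * (1 - (1 + Real.log 2 * a)⁻¹) / a)
      = 2/a + 2 := by field_simp; ring
  linarith

lemma part2_le {x K : ℝ} {f : ℝ → ℝ} (hx : 0 < x)
    (hf : IntervalIntegrable f volume (x/2) x)
    (hpt : ∀ s ∈ Icc (x/2) x, f s ≤ K * (Real.sqrt s * Real.sqrt (x-s))⁻¹) :
    ∫ s in (x/2)..x, f s ≤ K * (π/2) := by
  have h := intervalIntegral.integral_mono_on (by linarith) hf ((ker_II hx).const_mul K) hpt
  rwa [intervalIntegral.integral_const_mul, ker_integral hx] at h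

lemma part2_big {x c : ℝ} (hx : 0 < x) (hc : 0 < c) :
    ∫ s in (x/2)..x, Real.exp (-(c * (x-s))) * (x-s)^(-(1/2):ℝ)
      ≤ Real.sqrt π * Real.sqrt (1/c) := by
  have heq : (∫ s in (x/2)..x, Real.exp (-(c*(x-s))) * (x-s)^(-(1/2):ℝ))
      = ∫ u in (0:ℝ)..(x/2), Real.exp (-(c*u)) * u^(-(1/2):ℝ) := by
    have h := intervalIntegral.integral_comp_sub_left
      (a := x/2) (b := x) (fun u => Real.exp (-(c*u)) * u^(-(1/2):ℝ)) x
    rw [h, sub_self, show x - x/2 = x/2 by ring]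
  rw [heq]
  have hint : IntegrableOn (fun u : ℝ => Real.exp (-(c*u)) * u^(-(1/2):ℝ)) (Ioi 0) volume := by
    have h := integrableOn_rpow_mul_exp_neg_mul_rpow
      (p := 1) (s := -(1/2)) (b := c) (by norm_num) (by norm_num) hc
    simp only [Real.rpow_one] at h
    refine h.congr_fun (fun u hu => by beta_reduce; rw [mul_comm, neg_mul]) measurableSet_Ioi
  have hmono : (∫ u in Ioc (0:ℝ) (x/2), Real.exp (-(c*u)) * u^(-(1/2):ℝ))
      ≤ ∫ u in Ioi (0:ℝ), Real.exp (-(c*u)) * u^(-(1/2):ℝ) := by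
    apply setIntegral_mono_set hint
    · filter_upwards [ae_restrict_mem measurableSet_Ioi] with u hu
      have : (0:ℝ) < u := hu
      positivity
    · exact HasSubset.Subset.eventuallyLE Ioc_subset_Ioi_self
  rw [intervalIntegral.integral_of_le (by linarith)]
  refine hmono.trans (le_of_eq ?_)
  have h := Real.integral_rpow_mul_exp_neg_mul_Ioi (a := 1/2) (r := c) (by norm_num) hc
  rw [show (1/2 : ℝ) - 1 = -(1/2) by norm_num] at h
  rw [show (∫ u in Ioi (0:ℝ), Real.exp (-(c*u)) * u^(-(1/2):ℝ))
      = ∫ t in Ioi (0:ℝ), t^(-(1/2):ℝ) * Real.exp (-(c*t)) from by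
        congr 1; ext t; ring]
  rw [h, Real.Gamma_one_half_eq]
  simp only [Real.sqrt_eq_rpow, one_div]
  ring

set_option maxHeartbeats 1600000 in
theorem stmt7 (a x : ℝ) (ha : 0 < a) (hx : 0 < x) :
    (∫ s in Set.Ioo (0:ℝ) x, Real.exp (-s) * s^(a-1) / Real.sqrt (x - s)) ≤
      min (2 * Real.Gamma a + π * a^a * Real.exp (-a)) (2*(1/a + 1) * x^a) /
        Real.sqrt (2*x) := by
  set f : ℝ → ℝ := fun s => Real.exp (-s) * s^(a-1) / Real.sqrt (x - s) with hf
  have hx2 : 0 < x/2 := by linarith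
  have hle2 : x/2 ≤ x := by linarith
  have hsq2x : 0 < Real.sqrt (2*x) := Real.sqrt_pos.mpr (by linarith)
  have hsqx2 : Real.sqrt (x/2) = Real.sqrt (2*x) / 2 := by
    rw [show x/2 = (2*x)/4 by ring, show (4:ℝ) = 2^2 by norm_num,
      Real.sqrt_div' _ (by norm_num), Real.sqrt_sq (by norm_num)]
  have hsqx2pos : 0 < Real.sqrt (x/2) := Real.sqrt_pos.mpr hx2
  -- interval integrability of pieces
  have IIrpow : IntervalIntegrable (fun s : ℝ => s^(a-1)) volume 0 (x/2) :=
    intervalIntegral.intervalIntegrable_rpow' (by linarith)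
  have measf : Measurable f := by
    apply Measurable.div
    · exact (Real.measurable_exp.comp measurable_neg).mul (measurable_id.pow_const _)
    · exact Real.continuous_sqrt.measurable.comp (measurable_const.sub measurable_id)
  have IIexp : IntervalIntegrable (fun s : ℝ => Real.exp (-s) * s^(a-1)) volume 0 (x/2) := by
    apply IIrpow.mono_fun
    · exact ((Real.measurable_exp.comp measurable_neg).mul
        (measurable_id.pow_const _)).aestronglyMeasurable
    · rw [Set.uIoc_of_le hx2.le]
      filter_upwards [ae_restrict_mem measurableSet_Ioc] with s hs
      have hs0 : 0 < s := hs.1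
      rw [Real.norm_eq_abs, Real.norm_eq_abs, abs_of_nonneg (by positivity),
        abs_of_nonneg (by positivity)]
      nlinarith [Real.exp_le_one_iff.mpr (by linarith : -s ≤ 0),
        Real.rpow_pos_of_pos hs0 (a-1)]
  have IIf1 : IntervalIntegrable f volume 0 (x/2) := by
    apply (IIexp.const_mul ((Real.sqrt (x/2))⁻¹)).mono_fun measf.aestronglyMeasurable
    rw [Set.uIoc_of_le hx2.le]
    filter_upwards [ae_restrict_mem measurableSet_Ioc] with s hs
    have hs0 : 0 < s := hs.1
    have hxs : 0 < x - s := by nlinarith [hs.2]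
    have hb : (Real.sqrt (x-s))⁻¹ ≤ (Real.sqrt (x/2))⁻¹ := by
      apply inv_anti₀ hsqx2pos
      apply Real.sqrt_le_sqrt; nlinarith [hs.2]
    rw [Real.norm_eq_abs, Real.norm_eq_abs, abs_of_nonneg (by positivity),
      abs_of_nonneg (by positivity)]
    rw [hf]
    simp only [div_eq_mul_inv]
    have h1 : 0 ≤ Real.exp (-s) * s^(a-1) := by positivity
    calc Real.exp (-s) * s^(a-1) * (Real.sqrt (x-s))⁻¹
        ≤ Real.exp (-s) * s^(a-1) * (Real.sqrt (x/2))⁻¹ := by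
          apply mul_le_mul_of_nonneg_left hb h1
      _ = (Real.sqrt (x/2))⁻¹ * (Real.exp (-s) * s^(a-1)) := by ring
  have IIf2 : IntervalIntegrable f volume (x/2) x := by
    set M := max ((x/2)^(a-1)) (x^(a-1)) with hM
    have hM0 : 0 ≤ M := le_trans (Real.rpow_pos_of_pos hx2 (a-1)).le (le_max_left _ _)
    apply ((aux_rpow_II (x/2) x x).const_mul M).mono_fun measf.aestronglyMeasurable
    rw [Set.uIoc_of_le hle2]
    filter_upwards [ae_restrict_mem measurableSet_Ioc] with s hs
    have hs0 : 0 < s := lt_of_le_of_lt (by linarith) hs.1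
    have hxs : 0 ≤ x - s := by linarith [hs.2]
    have hsM : s^(a-1) ≤ M := by
      rcases le_total a 1 with h1 | h1
      · exact le_trans (Real.rpow_le_rpow_of_nonpos hx2 hs.1.le (by linarith)) (le_max_left _ _)
      · exact le_trans (Real.rpow_le_rpow hs0.le hs.2 (by linarith)) (le_max_right _ _)
    rw [Real.norm_eq_abs, Real.norm_eq_abs, abs_of_nonneg (by positivity),
      abs_of_nonneg (by positivity)]
    rw [hf]
    simp only [div_eq_mul_inv]
    rw [aux_inv_sqrt hxs]
    have hr0 : 0 ≤ (x - s)^(-(1/2):ℝ) := Real.rpow_nonneg hxs _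
    calc Real.exp (-s) * s^(a-1) * (x-s)^(-(1/2):ℝ)
        ≤ 1 * M * (x-s)^(-(1/2):ℝ) := by
          apply mul_le_mul_of_nonneg_right _ hr0
          apply mul_le_mul (Real.exp_le_one_iff.mpr (by linarith)) hsM
            (Real.rpow_nonneg hs0.le _) (by norm_num)
      _ = M * (x-s)^(-(1/2):ℝ) := by ring
  -- splitting
  have hsplit : (∫ s in Set.Ioo (0:ℝ) x, f s)
      = (∫ s in (0:ℝ)..(x/2), f s) + ∫ s in (x/2)..x, f s := by
    rw [intervalIntegral.integral_add_adjacent_intervals IIf1 IIf2,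
      intervalIntegral.integral_of_le hx.le, MeasureTheory.integral_Ioc_eq_integral_Ioo]
  -- part 1 bounds
  have hI1 : (∫ s in (0:ℝ)..(x/2), f s)
      ≤ (Real.sqrt (x/2))⁻¹ * ∫ s in (0:ℝ)..(x/2), Real.exp (-s) * s^(a-1) := by
    rw [← intervalIntegral.integral_const_mul]
    apply intervalIntegral.integral_mono_on hx2.le IIf1 (IIexp.const_mul _)
    intro s hs
    have hs0 : 0 ≤ s := hs.1
    have hxs : 0 ≤ x - s := by nlinarith [hs.2]
    have hb : (Real.sqrt (x-s))⁻¹ ≤ (Real.sqrt (x/2))⁻¹ := by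
      apply inv_anti₀ hsqx2pos
      apply Real.sqrt_le_sqrt; nlinarith [hs.2]
    rw [hf]
    simp only [div_eq_mul_inv]
    calc Real.exp (-s) * s^(a-1) * (Real.sqrt (x-s))⁻¹
        ≤ Real.exp (-s) * s^(a-1) * (Real.sqrt (x/2))⁻¹ := by
          apply mul_le_mul_of_nonneg_left hb (by positivity)
      _ = (Real.sqrt (x/2))⁻¹ * (Real.exp (-s) * s^(a-1)) := by ring
  have hG : (∫ s in (0:ℝ)..(x/2), Real.exp (-s) * s^(a-1)) ≤ Real.Gamma a := by
    rw [intervalIntegral.integral_of_le hx2.le, Real.Gamma_eq_integral ha]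
    apply setIntegral_mono_set (Real.GammaIntegral_convergent ha)
    · filter_upwards [ae_restrict_mem measurableSet_Ioi] with s hs
      have : (0:ℝ) < s := hs
      positivity
    · exact HasSubset.Subset.eventuallyLE Ioc_subset_Ioi_self
  have hGB : (∫ s in (0:ℝ)..(x/2), Real.exp (-s) * s^(a-1)) ≤ (x/2)^a / a := by
    have h1 : (∫ s in (0:ℝ)..(x/2), Real.exp (-s) * s^(a-1))
        ≤ ∫ s in (0:ℝ)..(x/2), s^(a-1) := by
      apply intervalIntegral.integral_mono_on hx2.le IIexp IIrpow
      intro s hs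
      nlinarith [Real.exp_le_one_iff.mpr (by linarith [hs.1] : -s ≤ 0),
        Real.rpow_nonneg hs.1 (a-1)]
    have h2 : (∫ s in (0:ℝ)..(x/2), s^(a-1)) = (x/2)^a / a := by
      rw [integral_rpow (Or.inl (by linarith))]
      rw [show a - 1 + 1 = a by ring, Real.zero_rpow ha.ne', sub_zero]
    linarith
  -- the main inequality, in two halves
  rw [hsplit, ← min_div_div_right hsq2x.le]
  apply le_min
  · -- Gamma bound
    have hI2 : (∫ s in (x/2)..x, f s)
        ≤ (a^a * Real.exp (-a) * (Real.sqrt (x/2))⁻¹) * (π/2) := by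
      apply part2_le hx IIf2
      intro s hs
      rcases eq_or_lt_of_le hs.2 with rfl | hsx
      · rw [hf]; simp
      have hs0 : 0 < s := lt_of_lt_of_le hx2 hs.1
      have hxs : 0 < x - s := by linarith
      have hss : (Real.sqrt s)⁻¹ * (Real.sqrt s)⁻¹ = s⁻¹ := by
        rw [← mul_inv, Real.mul_self_sqrt hs0.le]
      have hb : (Real.sqrt s)⁻¹ ≤ (Real.sqrt (x/2))⁻¹ := by
        apply inv_anti₀ hsqx2pos
        exact Real.sqrt_le_sqrt hs.1
      have heL : f s = (Real.exp (-s) * s^a) * ((Real.sqrt s)⁻¹ * (Real.sqrt s)⁻¹)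
          * (Real.sqrt (x-s))⁻¹ := by
        rw [hf]
        simp only []
        rw [hss, Real.rpow_sub hs0, Real.rpow_one]
        field_simp
      rw [heL, mul_inv]
      calc (Real.exp (-s) * s^a) * ((Real.sqrt s)⁻¹ * (Real.sqrt s)⁻¹) * (Real.sqrt (x-s))⁻¹
          ≤ (a^a * Real.exp (-a)) * ((Real.sqrt (x/2))⁻¹ * (Real.sqrt s)⁻¹)
            * (Real.sqrt (x-s))⁻¹ := by
            apply mul_le_mul_of_nonneg_right _ (by positivity)
            apply mul_le_mul (exp_mul_rpow_le ha hs0.le)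
              (mul_le_mul_of_nonneg_right hb (by positivity)) (by positivity) (by positivity)
        _ = a^a * Real.exp (-a) * (Real.sqrt (x/2))⁻¹ * ((Real.sqrt s)⁻¹ * (Real.sqrt (x-s))⁻¹) := by
            ring
    have hI1' : (∫ s in (0:ℝ)..(x/2), f s) ≤ (Real.sqrt (x/2))⁻¹ * Real.Gamma a :=
      hI1.trans (mul_le_mul_of_nonneg_left hG (by positivity))
    have hconv : (Real.sqrt (x/2))⁻¹ = 2 / Real.sqrt (2*x) := by
      rw [hsqx2]; field_simp
    rw [hconv] at hI1' hI2
    have : 2 / Real.sqrt (2*x) * Real.Gamma a + a^a * Real.exp (-a) * (2 / Real.sqrt (2*x)) * (π/2)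
        = (2 * Real.Gamma a + π * a^a * Real.exp (-a)) / Real.sqrt (2*x) := by
      field_simp
    linarith
  · -- x^a bound
    have hconv : (Real.sqrt (x/2))⁻¹ = 2 / Real.sqrt (2*x) := by
      rw [hsqx2]; field_simp
    have hI1' : (∫ s in (0:ℝ)..(x/2), f s) ≤ (Real.sqrt (x/2))⁻¹ * ((x/2)^a / a) :=
      hI1.trans (mul_le_mul_of_nonneg_left hGB (by positivity))
    have hxa2 : (x/2)^a = x^a * ((2:ℝ)^a)⁻¹ := by
      rw [Real.div_rpow hx.le (by norm_num), div_eq_mul_inv]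
    have h2apos : (0:ℝ) < (2:ℝ)^a := Real.rpow_pos_of_pos two_pos a
    have hxapos : (0:ℝ) < x^a := Real.rpow_pos_of_pos hx a
    have hrw2 : ((2:ℝ)^a)⁻¹ = (2:ℝ)^(-a) := by
      rw [Real.rpow_neg (by norm_num : (0:ℝ) ≤ 2)]
    rcases le_or_gt a (1/2) with hsmall | hmid0
    · -- small a : kernel bound with (x/2)^(a-1/2)
      have hI2 : (∫ s in (x/2)..x, f s) ≤ (x/2)^(a - 1/2) * (π/2) := by
        apply part2_le hx IIf2
        intro s hs
        rcases eq_or_lt_of_le hs.2 with rfl | hsx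
        · rw [hf]; simp
        have hs0 : 0 < s := lt_of_lt_of_le hx2 hs.1
        have hxs : 0 < x - s := by linarith
        have heL : f s = (Real.exp (-s) * s^(a - 1/2)) * ((Real.sqrt s)⁻¹
            * (Real.sqrt (x-s))⁻¹) := by
          rw [hf]
          simp only []
          rw [aux_inv_sqrt hs0.le, ← mul_assoc, mul_assoc (Real.exp (-s)),
            ← Real.rpow_add hs0, show a - 1/2 + -(1/2) = a - 1 by ring]
          rw [div_eq_mul_inv, aux_inv_sqrt hxs.le]
        rw [heL, mul_inv]
        apply mul_le_mul_of_nonneg_right _ (by positivity)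
        calc Real.exp (-s) * s^(a - 1/2) ≤ 1 * (x/2)^(a - 1/2) := by
              apply mul_le_mul (Real.exp_le_one_iff.mpr (by linarith))
                (Real.rpow_le_rpow_of_nonpos hx2 hs.1 (by linarith))
                (Real.rpow_nonneg hs0.le _) (by norm_num)
          _ = (x/2)^(a - 1/2) := one_mul _
      have hsplit2 : (x/2)^(a - 1/2) = (x/2)^a * (Real.sqrt (x/2))⁻¹ := by
        rw [Real.rpow_sub hx2, Real.sqrt_eq_rpow, div_eq_mul_inv]
      have hn := numeric1 ha
      rw [← hrw2] at hn
      have hnum : 2*(x/2)^a*(1/a + π/2) ≤ 2*(1/a+1)*x^a := by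
        have e1 : 2*(x/2)^a*(1/a + π/2) = (((2:ℝ)^a)⁻¹*(2+π*a)) * (x^a/a) := by
          rw [hxa2]; field_simp
        have e2 : 2*(1/a+1)*x^a = (2+2*a) * (x^a/a) := by
          field_simp
        rw [e1, e2]
        exact mul_le_mul_of_nonneg_right hn (by positivity)
      rw [hsplit2, hconv] at hI2
      rw [hconv] at hI1'
      have heq : 2/Real.sqrt (2*x) * ((x/2)^a/a) + (x/2)^a * (2/Real.sqrt (2*x)) * (π/2)
          = (2*(x/2)^a*(1/a + π/2))/Real.sqrt (2*x) := by
        field_simp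
      have h8 : (∫ s in (0:ℝ)..(x/2), f s) + (∫ s in (x/2)..x, f s)
          ≤ (2*(x/2)^a*(1/a + π/2))/Real.sqrt (2*x) := by
        rw [← heq]; linarith
      exact h8.trans ((div_le_div_iff_of_pos_right hsq2x).mpr hnum)
    rcases le_or_gt a 3 with hmid | hbig
    · -- middle range : kernel bound with x^(a-1/2)
      have hI2 : (∫ s in (x/2)..x, f s) ≤ x^(a - 1/2) * (π/2) := by
        apply part2_le hx IIf2
        intro s hs
        rcases eq_or_lt_of_le hs.2 with rfl | hsx
        · rw [hf]; simp
        have hs0 : 0 < s := lt_of_lt_of_le hx2 hs.1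
        have hxs : 0 < x - s := by linarith
        have heL : f s = (Real.exp (-s) * s^(a - 1/2)) * ((Real.sqrt s)⁻¹
            * (Real.sqrt (x-s))⁻¹) := by
          rw [hf]
          simp only []
          rw [aux_inv_sqrt hs0.le, ← mul_assoc, mul_assoc (Real.exp (-s)),
            ← Real.rpow_add hs0, show a - 1/2 + -(1/2) = a - 1 by ring]
          rw [div_eq_mul_inv, aux_inv_sqrt hxs.le]
        rw [heL, mul_inv]
        apply mul_le_mul_of_nonneg_right _ (by positivity)
        calc Real.exp (-s) * s^(a - 1/2) ≤ 1 * x^(a - 1/2) := by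
              apply mul_le_mul (Real.exp_le_one_iff.mpr (by linarith))
                (Real.rpow_le_rpow hs0.le hs.2 (by linarith))
                (Real.rpow_nonneg hs0.le _) (by norm_num)
          _ = x^(a - 1/2) := one_mul _
      have hsqrt2x : Real.sqrt (2*x) = Real.sqrt 2 * Real.sqrt x :=
        Real.sqrt_mul (by norm_num) x
      have hsqx : 0 < Real.sqrt x := Real.sqrt_pos.mpr hx
      have hsplit2 : x^(a - 1/2) = x^a * Real.sqrt 2 / Real.sqrt (2*x) := by
        rw [hsqrt2x, Real.rpow_sub hx,
          show x^((1:ℝ)/2) = Real.sqrt x from (Real.sqrt_eq_rpow x).symm]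
        rw [div_eq_div_iff hsqx.ne' (by positivity), mul_comm (Real.sqrt 2) (Real.sqrt x)]
        ring
      have hn := numeric2 hmid0.le hmid
      have key : 2 * ((x/2)^a/a) + x^a * Real.sqrt 2 * (π/2) ≤ 2*(1/a+1)*x^a := by
        have e1 : 2 * ((x/2)^a/a) + x^a * Real.sqrt 2 * (π/2)
            = (2 * (2:ℝ)^(-a) / a + Real.sqrt 2 * π / 2) * x^a := by
          rw [hxa2, ← hrw2]; field_simp
        have e2 : 2*(1/a+1)*x^a = (2/a + 2) * x^a := by
          field_simp
        rw [e1, e2]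
        exact mul_le_mul_of_nonneg_right hn hxapos.le
      rw [hconv] at hI1'
      rw [hsplit2] at hI2
      have h8 : (∫ s in (0:ℝ)..(x/2), f s) + (∫ s in (x/2)..x, f s)
          ≤ (2 * ((x/2)^a/a) + x^a * Real.sqrt 2 * (π/2)) / Real.sqrt (2*x) := by
        have e3 : 2 / Real.sqrt (2*x) * ((x/2)^a / a) = 2 * ((x/2)^a/a) / Real.sqrt (2*x) := by
          ring
        have e4 : x^a * Real.sqrt 2 / Real.sqrt (2*x) * (π/2)
            = x^a * Real.sqrt 2 * (π/2) / Real.sqrt (2*x) := by ring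
        rw [e3] at hI1'
        rw [e4] at hI2
        rw [add_div]
        linarith
      exact h8.trans ((div_le_div_iff_of_pos_right hsq2x).mpr key)
    · -- large a
      set c : ℝ := (a-1)/x with hcdef
      have hc : 0 < c := div_pos (by linarith) hx
      have IIbig : IntervalIntegrable
          (fun s => Real.exp (-(c*(x-s))) * (x-s)^(-(1/2):ℝ)) volume (x/2) x := by
        apply (aux_rpow_II (x/2) x x).mono_fun
        · apply Measurable.aestronglyMeasurable
          apply Measurable.mul
          · exact Real.measurable_exp.comp
              (((measurable_const.sub measurable_id).const_mul c).neg)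
          · exact (measurable_const.sub measurable_id).pow_const _
        · rw [Set.uIoc_of_le hle2]
          filter_upwards [ae_restrict_mem measurableSet_Ioc] with s hs
          have hxs : 0 ≤ x - s := by linarith [hs.2]
          rw [Real.norm_eq_abs, Real.norm_eq_abs, abs_of_nonneg (by positivity),
            abs_of_nonneg (Real.rpow_nonneg hxs _)]
          have hee : Real.exp (-(c*(x-s))) ≤ 1 :=
            Real.exp_le_one_iff.mpr (by nlinarith)
          nlinarith [Real.rpow_nonneg hxs (-(1/2):ℝ)]
      have hI2 : (∫ s in (x/2)..x, f s)
          ≤ x^(a-1) * (Real.sqrt π * Real.sqrt (1/c)) := by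
        have hpt : ∀ s ∈ Icc (x/2) x, f s
            ≤ x^(a-1) * (Real.exp (-(c*(x-s))) * (x-s)^(-(1/2):ℝ)) := by
          intro s hs
          rcases eq_or_lt_of_le hs.2 with rfl | hsx
          · rw [hf]
            simp [Real.zero_rpow (by norm_num : (-(1/2):ℝ) ≠ 0)]
          · have hs0 : 0 < s := lt_of_lt_of_le hx2 hs.1
            have hxs : 0 < x - s := by linarith
            have hdecay := rpow_le_exp_decay hx hs0 (by linarith : 1 ≤ a)
            rw [hf]
            simp only []
            rw [div_eq_mul_inv, aux_inv_sqrt hxs.le]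
            have hre : Real.exp (-((a-1)/x) * (x - s)) = Real.exp (-(c*(x-s))) := by
              rw [hcdef]; ring_nf
            rw [hre] at hdecay
            calc Real.exp (-s) * s^(a-1) * (x-s)^(-(1/2):ℝ)
                ≤ 1 * (x^(a-1) * Real.exp (-(c*(x-s)))) * (x-s)^(-(1/2):ℝ) := by
                  apply mul_le_mul_of_nonneg_right _ (Real.rpow_nonneg hxs.le _)
                  apply mul_le_mul (Real.exp_le_one_iff.mpr (by linarith)) hdecay
                    (Real.rpow_nonneg hs0.le _) (by norm_num)
              _ = x^(a-1) * (Real.exp (-(c*(x-s))) * (x-s)^(-(1/2):ℝ)) := by ring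
        have h1 := intervalIntegral.integral_mono_on hle2 IIf2
          (IIbig.const_mul (x^(a-1))) hpt
        rw [intervalIntegral.integral_const_mul] at h1
        refine h1.trans ?_
        exact mul_le_mul_of_nonneg_left (part2_big hx hc) (Real.rpow_nonneg hx.le _)
      have hsc : Real.sqrt (1/c) ≤ Real.sqrt (x/2) := by
        apply Real.sqrt_le_sqrt
        rw [hcdef, one_div, inv_div, div_le_div_iff₀ (by linarith) (by norm_num)]
        nlinarith
      have hspi : Real.sqrt π ≤ 2 := by
        rw [show (2:ℝ) = Real.sqrt 4 by
          rw [show (4:ℝ) = 2^2 by norm_num, Real.sqrt_sq (by norm_num)]]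
        exact Real.sqrt_le_sqrt (le_of_lt Real.pi_lt_four)
      have hxa1 : x^(a-1) * x = x^a := by
        rw [Real.rpow_sub hx, Real.rpow_one]
        field_simp
      have hI2' : (∫ s in (x/2)..x, f s) ≤ 2 * x^a / Real.sqrt (2*x) := by
        have h1 : x^(a-1) * (Real.sqrt π * Real.sqrt (1/c))
            ≤ x^(a-1) * (2 * Real.sqrt (x/2)) := by
          apply mul_le_mul_of_nonneg_left _ (Real.rpow_nonneg hx.le _)
          apply mul_le_mul hspi hsc (Real.sqrt_nonneg _) (by norm_num)
        have h3 : Real.sqrt (2*x) * Real.sqrt (2*x) = 2*x :=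
          Real.mul_self_sqrt (by linarith)
        have h2 : x^(a-1) * (2 * Real.sqrt (x/2)) = 2 * x^a / Real.sqrt (2*x) := by
          rw [hsqx2, show x^(a-1) * (2 * (Real.sqrt (2*x)/2)) = x^(a-1) * Real.sqrt (2*x)
            from by ring, eq_div_iff hsq2x.ne', mul_assoc, h3, ← hxa1]
          ring
        linarith
      have hI1'' : (∫ s in (0:ℝ)..(x/2), f s) ≤ 2 / Real.sqrt (2*x) * (x^a/a) := by
        rw [hconv] at hI1'
        refine hI1'.trans ?_
        gcongr <;> linarith
      have heq : 2 / Real.sqrt (2*x) * (x^a/a) + 2 * x^a / Real.sqrt (2*x)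
          = 2*(1/a+1)*x^a / Real.sqrt (2*x) := by
        field_simp
      linarith
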